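/- Suppose for a packet n with length l there exists m ≤ n such that R·max(0, (Q_n − A_m) − T) ≤ Σ_{k=m}^{n−1} l_k, and suppose the arrival-curve constraint Σ_{k=m}^{n} l_k ≤ α⁺(A_n − A_m) holds for all m ≤ n, where α⁺ is the right-limit of a monotone function α. Then Q_n − A_n ≤ T − l/R + (1/R)·sup_{t≥0}(α(t) − R·t), and consequently the departure time D_n = Q_n + l/c satisfies D_n − A_n ≤ Δ − l·(1/R − 1/c), where Δ = T + sup_{t≥0}(α(t)/R − t). -/

import Mathlib

/-- If for packet `n` (of length `l n`) there is `m ≤ n` with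
`R·max(0, (Qₙ − Aₘ) − T) ≤ Σ_{k=m}^{n−1} l k`, and the max-plus arrival-curve
constraint `Σ_{k=m}^{n} l k ≤ α⁺(Aₙ − Aₘ)` holds for all `m ≤ n`, then
`Qₙ − Aₙ ≤ T − l n / R + (1/R)·sup_{t≥0}(α t − R t)` and the departure time
`Dₙ = Qₙ + l n / c` satisfies `Dₙ − Aₙ ≤ Δ − l n·(1/R − 1/c)` where
`Δ = T + sup_{t≥0}(α t / R − t)`. -/
theorem stmt5 (R c T : ℝ) (hR : 0 < R) (hc : R ≤ c) (hT : 0 ≤ T)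
    (α αp : ℝ → ℝ) (hα : MonotoneOn α (Set.Ici 0))
    (hαp : ∀ t : ℝ, 0 ≤ t →
      Filter.Tendsto α (nhdsWithin t (Set.Ioi t)) (nhds (αp t)))
    (hbdd : BddAbove {y : ℝ | ∃ t : ℝ, 0 ≤ t ∧ y = α t - R * t})
    (A l : ℕ → ℝ) (n : ℕ)
    (hAmono : ∀ i j, i ≤ j → A i ≤ A j) (hAnn : ∀ i, 0 ≤ A i)
    (hl : ∀ i, 0 < l i)
    (Q D : ℝ) (hQA : A n ≤ Q) (hD : D = Q + l n / c)
    (h1 : ∃ m : ℕ, m ≤ n ∧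
      R * max 0 ((Q - A m) - T) ≤ ∑ k ∈ Finset.Ico m n, l k)
    (h2 : ∀ m : ℕ, m ≤ n → ∑ k ∈ Finset.Icc m n, l k ≤ αp (A n - A m)) :
    Q - A n ≤ T - l n / R
        + (1 / R) * sSup {y : ℝ | ∃ t : ℝ, 0 ≤ t ∧ y = α t - R * t} ∧
      D - A n ≤ (T + sSup {y : ℝ | ∃ t : ℝ, 0 ≤ t ∧ y = α t / R - t})
        - l n * (1 / R - 1 / c) := by
  set s : Set ℝ := {y : ℝ | ∃ t : ℝ, 0 ≤ t ∧ y = α t - R * t} with hs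
  set s' : Set ℝ := {y : ℝ | ∃ t : ℝ, 0 ≤ t ∧ y = α t / R - t} with hs'
  set S := sSup s with hS
  have hmem : ∀ u, 0 ≤ u → α u - R * u ≤ S := fun u hu => le_csSup hbdd ⟨u, hu, rfl⟩
  -- key: αp t ≤ S + R t for t ≥ 0
  have hkey : ∀ t, 0 ≤ t → αp t ≤ S + R * t := by
    intro t ht
    have hlim := hαp t ht
    have hlim2 : Filter.Tendsto (fun u => S + R * u) (nhdsWithin t (Set.Ioi t))
        (nhds (S + R * t)) :=
      ((continuous_const.add (continuous_const.mul continuous_id)).tendsto t).mono_left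
        nhdsWithin_le_nhds
    refine le_of_tendsto_of_tendsto hlim hlim2 ?_
    refine Filter.eventually_of_mem self_mem_nhdsWithin (fun u hu => ?_)
    have hu0 : 0 ≤ u := le_trans ht (le_of_lt hu)
    have := hmem u hu0
    show α u ≤ S + R * u
    linarith
  obtain ⟨m, hm, hmax⟩ := h1
  have hAm : A m ≤ A n := hAmono m n hm
  have htn : 0 ≤ A n - A m := by linarith
  have hsum : ∑ k ∈ Finset.Icc m n, l k = (∑ k ∈ Finset.Ico m n, l k) + l n := by
    rw [← Finset.Ico_add_one_right_eq_Icc, Finset.sum_Ico_succ_top hm]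
  have h2' := h2 m hm
  have hk := hkey (A n - A m) htn
  have hstep : R * ((Q - A m) - T) ≤ S + R * (A n - A m) - l n := by
    have h0 : (Q - A m) - T ≤ max 0 ((Q - A m) - T) := le_max_right _ _
    have : R * ((Q - A m) - T) ≤ R * max 0 ((Q - A m) - T) :=
      mul_le_mul_of_nonneg_left h0 hR.le
    rw [hsum] at h2'
    linarith
  have hfirst : Q - A n ≤ T - l n / R + (1 / R) * S := by
    have e1 : (T - l n / R + (1/R)*S) * R = T*R - l n + S := by field_simp
    nlinarith [hstep, e1, hR]
  refine ⟨hfirst, ?_⟩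
  -- second part: S / R ≤ sSup s'
  have hsne : s.Nonempty := ⟨α 0 - R * 0, 0, le_refl _, rfl⟩
  obtain ⟨B, hB⟩ := hbdd
  have hs'bdd : BddAbove s' := by
    refine ⟨B / R, fun y hy => ?_⟩
    obtain ⟨t, ht, rfl⟩ := hy
    have h1 : α t - R * t ≤ B := hB ⟨t, ht, rfl⟩
    rw [div_sub' (ne_of_gt hR), div_le_div_iff₀ hR hR]
    nlinarith
  have hSle : S ≤ R * sSup s' := by
    refine csSup_le hsne (fun y hy => ?_)
    obtain ⟨t, ht, rfl⟩ := hy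
    have h1 : α t / R - t ≤ sSup s' := le_csSup hs'bdd ⟨t, ht, rfl⟩
    have h2 : α t = R * (α t / R) := by field_simp
    nlinarith
  have hSR : (1 / R) * S ≤ sSup s' := by
    rw [div_mul_eq_mul_div, one_mul, div_le_iff₀ hR]
    linarith [hSle, mul_comm R (sSup s')]
  have hln : l n / c ≤ l n / R + (sSup s' - (1/R) * S) := by
    have h3 : l n / c ≤ l n / R := by
      exact div_le_div_of_nonneg_left (hl n).le hR hc
    linarith
  rw [hD]
  have : Q + l n / c - A n = (Q - A n) + l n / c := by ring
  rw [this]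
  have hcalc : (Q - A n) + l n / c ≤ T - l n / R + (1/R) * S + l n / c := by linarith
  calc (Q - A n) + l n / c ≤ T - l n / R + (1/R) * S + l n / c := hcalc
    _ ≤ T + sSup s' - l n * (1 / R - 1 / c) := by
        have : l n * (1 / R - 1 / c) = l n / R - l n / c := by ring
        linarith
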